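/- Let Δ(x) = Σ_{j=1}^g λⱼ/(cⱼ − x) with λⱼ > 0 and c₁,…,c_g distinct reals, and let y be such that Δ⁻¹(y) = {x₁,…,x_g} consists of g distinct points, each different from all cⱼ. Then ∏_{k=1}^g Δ'(xₖ) = [∏_{k<j}(xₖ−xⱼ)²(cₖ−cⱼ)² / ∏_{k,j}(cₖ−xⱼ)²] · ∏_{k=1}^g λₖ. -/

import Mathlib

open Polynomial Finset


/-- Let `Δ(t) = Σⱼ λⱼ/(cⱼ − t)` with `λⱼ > 0` and distinct `cⱼ`, and let
`x₁,…,x_g` be `g` distinct points, distinct from all `cⱼ`, forming the full preimage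
`Δ⁻¹(y)`. Then `∏ₖ Δ'(xₖ) = [∏_{k<j}(xₖ−xⱼ)²(cₖ−cⱼ)² / ∏_{k,j}(cₖ−xⱼ)²] · ∏ₖ λₖ`,
where `Δ'(t) = Σⱼ λⱼ/(cⱼ−t)²`. -/
theorem product_of_derivatives (g : ℕ) (x c lam : Fin g → ℝ) (y : ℝ)
    (hlam : ∀ j, 0 < lam j)
    (hx : Function.Injective x) (hc : Function.Injective c)
    (hxc : ∀ k j, x k ≠ c j)
    (hpre : ∀ t : ℝ, (∀ j, t ≠ c j) →
      ((∑ j : Fin g, lam j / (c j - t)) = y ↔ ∃ k, t = x k)) :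
    (∏ k : Fin g, ∑ j : Fin g, lam j / (c j - x k)^2)
      = (∏ k : Fin g, ∏ j ∈ Finset.Ioi k, (x k - x j)^2 * (c k - c j)^2) /
          (∏ k : Fin g, ∏ j : Fin g, (c k - x j)^2) *
        ∏ k : Fin g, lam k := by
  rcases Nat.eq_zero_or_pos g with hg | hg
  · subst hg; simp
  have hxcne : ∀ k j, x k - c j ≠ 0 := fun k j => sub_ne_zero.2 (hxc k j)
  have hcxne : ∀ k j, c k - x j ≠ 0 := fun k j => sub_ne_zero.2 (Ne.symm (hxc j k))
  have hΔ : ∀ k, ∑ j, lam j / (c j - x k) = y :=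
    fun k => (hpre (x k) (fun j => hxc k j)).2 ⟨k, rfl⟩
  set Pc : ℝ[X] := ∏ j, (X - C (c j)) with hPc
  set Px : ℝ[X] := ∏ k, (X - C (x k)) with hPx
  set N : Fin g → ℝ[X] := fun j => ∏ i ∈ univ.erase j, (X - C (c i)) with hN
  -- Step A : the fundamental polynomial identity
  have key : ∀ m, y * ∏ i, (x m - c i) = -∑ j, lam j * ∏ i ∈ univ.erase j, (x m - c i) := by
    intro m
    have hterm : ∀ j : Fin g, lam j / (c j - x m) * ∏ i, (x m - c i)
        = -(lam j * ∏ i ∈ univ.erase j, (x m - c i)) := by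
      intro j
      rw [← Finset.mul_prod_erase _ _ (Finset.mem_univ j)]
      have h1 : c j - x m ≠ 0 := hcxne j m
      field_simp
      ring
    calc y * ∏ i, (x m - c i) = (∑ j, lam j / (c j - x m)) * ∏ i, (x m - c i) := by
          rw [hΔ m]
      _ = ∑ j, lam j / (c j - x m) * ∏ i, (x m - c i) := Finset.sum_mul _ _ _
      _ = ∑ j, -(lam j * ∏ i ∈ univ.erase j, (x m - c i)) := by
          exact Finset.sum_congr rfl fun j _ => hterm j
      _ = -∑ j, lam j * ∏ i ∈ univ.erase j, (x m - c i) := by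
          rw [Finset.sum_neg_distrib]
  have hmc : Pc.Monic := monic_prod_of_monic _ _ fun i _ => monic_X_sub_C _
  have hmx : Px.Monic := monic_prod_of_monic _ _ fun i _ => monic_X_sub_C _
  have hdegc : Pc.natDegree = g := by
    rw [hPc, natDegree_prod_of_monic _ _ fun i _ => monic_X_sub_C _]
    simp [natDegree_X_sub_C]
  have hdegx : Px.natDegree = g := by
    rw [hPx, natDegree_prod_of_monic _ _ fun i _ => monic_X_sub_C _]
    simp [natDegree_X_sub_C]
  have hQ : C y * Pc + ∑ j, C (lam j) * N j = C y * Px := by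
    have hsub : (Pc - Px).natDegree < g := by
      rcases eq_or_ne Pc Px with h | h
      · simpa [h] using hg
      · have hd : (Pc - Px).degree < Pc.degree :=
          Polynomial.degree_sub_lt
            (by rw [Polynomial.degree_eq_natDegree hmc.ne_zero,
                Polynomial.degree_eq_natDegree hmx.ne_zero, hdegc, hdegx])
            hmc.ne_zero (by rw [hmc.leadingCoeff, hmx.leadingCoeff])
        rw [Polynomial.degree_eq_natDegree hmc.ne_zero, hdegc] at hd
        exact (Polynomial.natDegree_lt_iff_degree_lt (sub_ne_zero.2 h)).2 hd
    have hQ0 : C y * (Pc - Px) + ∑ j, C (lam j) * N j = 0 := by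
      apply Polynomial.eq_zero_of_natDegree_lt_card_of_eval_eq_zero _ hx
      · intro m
        have hPxz : Px.eval (x m) = 0 := by
          rw [hPx, eval_prod]
          exact Finset.prod_eq_zero (Finset.mem_univ m) (by simp)
        have hkey := key m
        simp only [eval_add, eval_mul, eval_sub, eval_C, eval_finset_sum, eval_prod, eval_X,
          hPc, hPx, hN] at hPxz ⊢
        rw [hPxz]
        linarith [hkey]
      · rw [Fintype.card_fin]
        refine lt_of_le_of_lt (natDegree_add_le _ _) (max_lt ?_ ?_)
        · exact lt_of_le_of_lt (natDegree_C_mul_le _ _) hsub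
        · refine lt_of_le_of_lt (natDegree_sum_le_of_forall_le _ _ fun j _ => ?_)
            (Nat.sub_lt hg one_pos)
          refine le_trans (natDegree_C_mul_le _ _) (le_trans (natDegree_prod_le _ _) ?_)
          simp [natDegree_X_sub_C, Finset.card_erase_of_mem]
    linear_combination hQ0
  -- Step B : per-k formula for the derivative sum
  have hF : ∀ k, (∑ j, C (lam j / (x k - c j)) * N j)
      + C y * ∏ i ∈ univ.erase k, (X - C (x i)) = 0 := by
    intro k
    have hXk : (X - C (x k) : ℝ[X]) ≠ 0 := Polynomial.X_sub_C_ne_zero (x k)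
    apply mul_left_cancel₀ hXk
    rw [mul_zero]
    have hsum : ∑ j, lam j / (x k - c j) = -y := by
      rw [← hΔ k, ← Finset.sum_neg_distrib]
      refine Finset.sum_congr rfl fun j _ => ?_
      rw [← div_neg, neg_sub]
    have hterm : ∀ j : Fin g, (X - C (x k)) * (C (lam j / (x k - c j)) * N j)
        = C (lam j / (x k - c j)) * Pc - C (lam j) * N j := by
      intro j
      have h1 : (X - C (c j)) * N j = Pc :=
        Finset.mul_prod_erase univ (fun i => X - C (c i)) (Finset.mem_univ j)
      have h2 : (lam j / (x k - c j)) * (x k - c j) = lam j := div_mul_cancel₀ _ (hxcne k j)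
      calc (X - C (x k)) * (C (lam j / (x k - c j)) * N j)
          = C (lam j / (x k - c j)) * ((X - C (c j)) * N j)
            - C ((lam j / (x k - c j)) * (x k - c j)) * N j := by
            simp only [map_mul, map_sub]; ring
        _ = C (lam j / (x k - c j)) * Pc - C (lam j) * N j := by rw [h1, h2]
    have E1 : (X - C (x k)) * ∑ j, C (lam j / (x k - c j)) * N j
        = C (-y) * Pc - ∑ j, C (lam j) * N j := by
      rw [Finset.mul_sum]
      rw [Finset.sum_congr rfl fun j _ => hterm j, Finset.sum_sub_distrib, ← Finset.sum_mul,
        ← map_sum C _ _, hsum]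
    have E2 : (X - C (x k)) * ∏ i ∈ univ.erase k, (X - C (x i)) = Px :=
      Finset.mul_prod_erase univ (fun i => X - C (x i)) (Finset.mem_univ k)
    rw [mul_add, E1, mul_left_comm, E2, map_neg]
    linear_combination -hQ
  have hD : ∀ k, (∑ j, lam j / (c j - x k)^2) * (∏ i, (x k - c i))
      = -y * ∏ i ∈ univ.erase k, (x k - x i) := by
    intro k
    have hev := congrArg (Polynomial.eval (x k)) (hF k)
    simp only [eval_add, eval_mul, eval_sub, eval_C, eval_finset_sum, eval_prod, eval_X,
      eval_zero, hN] at hev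
    have hterm : ∀ j : Fin g, lam j / (c j - x k)^2 * ∏ i, (x k - c i)
        = lam j / (x k - c j) * ∏ i ∈ univ.erase j, (x k - c i) := by
      intro j
      rw [← Finset.mul_prod_erase _ _ (Finset.mem_univ j)]
      have h1 : x k - c j ≠ 0 := hxcne k j
      have h2 : c j - x k ≠ 0 := hcxne j k
      field_simp
      ring
    rw [Finset.sum_mul, Finset.sum_congr rfl fun j _ => hterm j]
    linarith [hev]
  -- Step C : formula for lam
  have hL : ∀ m, lam m * ∏ i ∈ univ.erase m, (c m - c i) = y * ∏ j, (c m - x j) := by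
    intro m
    have hev := congrArg (Polynomial.eval (c m)) hQ
    simp only [eval_add, eval_mul, eval_sub, eval_C, eval_finset_sum, eval_prod, eval_X,
      hPc, hPx, hN] at hev
    have h0 : ∏ j : Fin g, (c m - c j) = 0 :=
      Finset.prod_eq_zero (Finset.mem_univ m) (by simp)
    have h1 : ∑ j : Fin g, lam j * ∏ i ∈ univ.erase j, (c m - c i)
        = lam m * ∏ i ∈ univ.erase m, (c m - c i) := by
      refine Finset.sum_eq_single m (fun j _ hjm => ?_) (fun h => absurd (Finset.mem_univ m) h)
      exact mul_eq_zero_of_right _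
        (Finset.prod_eq_zero (Finset.mem_erase.2 ⟨hjm.symm, Finset.mem_univ m⟩) (by simp))
    rw [h0, h1] at hev
    linarith [hev]
  -- Step D : assemble
  set VX := ∏ i : Fin g, ∏ j ∈ Finset.Ioi i, (x i - x j)^2 with hVX
  set VC := ∏ i : Fin g, ∏ j ∈ Finset.Ioi i, (c i - c j)^2 with hVC
  set S := ∏ _i : Fin g, ∏ _j ∈ Finset.Ioi _i, (-1 : ℝ) with hS
  set W := ∏ k : Fin g, ∏ j : Fin g, (c k - x j) with hW
  have hBne : ∀ k, (∏ i, (x k - c i)) ≠ 0 :=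
    fun k => Finset.prod_ne_zero_iff.2 fun i _ => hxcne k i
  have hEne : ∀ m, (∏ i ∈ univ.erase m, (c m - c i)) ≠ 0 := fun m =>
    Finset.prod_ne_zero_iff.2 fun i hi =>
      sub_ne_zero.2 fun h => (Finset.mem_erase.1 hi).1 (hc h).symm
  have hWne : W ≠ 0 := Finset.prod_ne_zero_iff.2 fun k _ =>
    Finset.prod_ne_zero_iff.2 fun j _ => hcxne k j
  have hVCne : VC ≠ 0 := Finset.prod_ne_zero_iff.2 fun i _ =>
    Finset.prod_ne_zero_iff.2 fun j hj =>
      pow_ne_zero _ (sub_ne_zero.2 fun h => (Finset.mem_Ioi.1 hj).ne (hc h))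
  have hSS : S = 1 ∨ S = -1 := by
    refine mul_self_eq_one_iff.1 ?_
    rw [hS, ← Finset.prod_mul_distrib]
    refine Finset.prod_eq_one fun i _ => ?_
    rw [← Finset.prod_mul_distrib]
    exact Finset.prod_eq_one fun j _ => by norm_num
  have hAX : ∏ k, ∏ i ∈ univ.erase k, (x k - x i) = S * VX := by
    have h := Finset.prod_prod_Ioi_mul_eq_prod_prod_off_diag (f := fun a b => x b - x a)
    simp only [Finset.compl_singleton] at h
    calc ∏ k, ∏ i ∈ univ.erase k, (x k - x i)
        = ∏ i, ∏ j ∈ Finset.Ioi i, ((x i - x j) * (x j - x i)) := by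
          convert h.symm using 4
      _ = ∏ i, ∏ j ∈ Finset.Ioi i, ((-1) * (x i - x j)^2) :=
          Finset.prod_congr rfl fun i _ => Finset.prod_congr rfl fun j _ => by ring
      _ = S * VX := by
          rw [hS, hVX, ← Finset.prod_mul_distrib]
          exact Finset.prod_congr rfl fun i _ => Finset.prod_mul_distrib
  have hEC : ∏ m, ∏ i ∈ univ.erase m, (c m - c i) = S * VC := by
    have h := Finset.prod_prod_Ioi_mul_eq_prod_prod_off_diag (f := fun a b => c b - c a)
    simp only [Finset.compl_singleton] at h
    calc ∏ m, ∏ i ∈ univ.erase m, (c m - c i)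
        = ∏ i, ∏ j ∈ Finset.Ioi i, ((c i - c j) * (c j - c i)) := by
          convert h.symm using 4
      _ = ∏ i, ∏ j ∈ Finset.Ioi i, ((-1) * (c i - c j)^2) :=
          Finset.prod_congr rfl fun i _ => Finset.prod_congr rfl fun j _ => by ring
      _ = S * VC := by
          rw [hS, hVC, ← Finset.prod_mul_distrib]
          exact Finset.prod_congr rfl fun i _ => Finset.prod_mul_distrib
  have hB : ∏ k : Fin g, ∏ i : Fin g, (x k - c i) = ((-1:ℝ)^g)^g * W := by
    calc ∏ k : Fin g, ∏ i : Fin g, (x k - c i)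
        = ∏ k : Fin g, ∏ i : Fin g, ((-1) * (c i - x k)) :=
          Finset.prod_congr rfl fun k _ => Finset.prod_congr rfl fun i _ => by ring
      _ = ∏ k : Fin g, ((-1:ℝ)^g * ∏ i : Fin g, (c i - x k)) := by
          refine Finset.prod_congr rfl fun k _ => ?_
          rw [Finset.prod_mul_distrib, Finset.prod_const, Finset.card_univ, Fintype.card_fin]
      _ = ((-1:ℝ)^g)^g * ∏ k : Fin g, ∏ i : Fin g, (c i - x k) := by
          rw [Finset.prod_mul_distrib, Finset.prod_const, Finset.card_univ, Fintype.card_fin]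
      _ = ((-1:ℝ)^g)^g * W := by rw [hW, Finset.prod_comm]
  have hLHS : ∏ k, (∑ j, lam j / (c j - x k)^2)
      = ((-y)^g * (S * VX)) / (((-1:ℝ)^g)^g * W) := by
    rw [← hAX, ← hB]
    calc ∏ k, (∑ j, lam j / (c j - x k)^2)
        = ∏ k, ((-y * ∏ i ∈ univ.erase k, (x k - x i)) / ∏ i, (x k - c i)) :=
          Finset.prod_congr rfl fun k _ => (eq_div_iff (hBne k)).2 (hD k)
      _ = (∏ k, (-y * ∏ i ∈ univ.erase k, (x k - x i))) / ∏ k, ∏ i, (x k - c i) :=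
          Finset.prod_div_distrib _ _
      _ = ((-y)^g * ∏ k, ∏ i ∈ univ.erase k, (x k - x i)) / ∏ k, ∏ i, (x k - c i) := by
          rw [Finset.prod_mul_distrib, Finset.prod_const, Finset.card_univ, Fintype.card_fin]
  have hlamP : ∏ m, lam m = (y^g * W) / (S * VC) := by
    rw [← hEC, hW]
    calc ∏ m, lam m
        = ∏ m, ((y * ∏ j, (c m - x j)) / ∏ i ∈ univ.erase m, (c m - c i)) :=
          Finset.prod_congr rfl fun m _ => (eq_div_iff (hEne m)).2 (hL m)
      _ = (∏ m, (y * ∏ j, (c m - x j))) / ∏ m, ∏ i ∈ univ.erase m, (c m - c i) :=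
          Finset.prod_div_distrib _ _
      _ = (y^g * ∏ m, ∏ j, (c m - x j)) / ∏ m, ∏ i ∈ univ.erase m, (c m - c i) := by
          rw [Finset.prod_mul_distrib, Finset.prod_const, Finset.card_univ, Fintype.card_fin]
  have hnum : ∏ k, ∏ j ∈ Finset.Ioi k, ((x k - x j)^2 * (c k - c j)^2) = VX * VC := by
    rw [hVX, hVC, ← Finset.prod_mul_distrib]
    exact Finset.prod_congr rfl fun i _ => Finset.prod_mul_distrib
  have hden : ∏ k : Fin g, ∏ j : Fin g, (c k - x j)^2 = W^2 := by
    rw [hW, ← Finset.prod_pow]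
    exact Finset.prod_congr rfl fun k _ => Finset.prod_pow _ _ _
  rw [hLHS, hnum, hden, hlamP, neg_pow]
  have hm1 : ((-1:ℝ))^g = 1 ∨ ((-1:ℝ))^g = -1 := by
    rcases Nat.even_or_odd g with hpar | hpar
    · exact Or.inl hpar.neg_one_pow
    · exact Or.inr hpar.neg_one_pow
  rcases hm1 with h1 | h1 <;> rcases hSS with hs | hs <;> simp only [h1, hs, one_pow] <;>
    field_simp <;> ring
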